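/- Let V ⊆ k[[X]] be a k[[X³]]-submodule whose quotient k[[X]]/V is one-dimensional over k, let w²A denote the ideal of A = k[[X]] ⊗_{k[[X³]]} k[[X]] generated by w², and let Im(V) denote the image of V ⊗_{k[[X³]]} k[[X]] in A. Then the quotient additive group w²A/(w²A ∩ Im(V)) is a finite-dimensional k-vector space, and its dimension over k equals: 1 if X ∈ V and X² ∈ V; 2 if X ∉ V and X² ∈ V; and 3 if X² ∉ V. -/

import Mathlib

open PowerSeries TensorProduct

set_option synthInstance.maxHeartbeats 1000000
set_option maxHeartbeats 2000000

section Aux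
variable {k : Type*} [Field k]

/-- The `i`-th section map: `Ssec i f = ∑ coeff (3n+i) f · Xⁿ`. -/
noncomputable def Ssec (i : ℕ) : PowerSeries k →ₗ[k] PowerSeries k where
  toFun f := PowerSeries.mk fun n => coeff (3*n+i) f
  map_add' := by intros; ext n; simp
  map_smul' := by intros; ext n; simp

@[simp] lemma coeff_Ssec (i n : ℕ) (f : PowerSeries k) :
    coeff n (Ssec i f) = coeff (3*n+i) f := by
  simp [Ssec]

variable (φ : PowerSeries k →ₐ[k] PowerSeries k)
  (hφ : ∀ (f : PowerSeries k) (n : ℕ),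
      coeff n (φ f) = if 3 ∣ n then coeff (n / 3) f else 0)

include hφ in
lemma Ssec_decomp (f : PowerSeries k) :
    f = φ (Ssec 0 f) + φ (Ssec 1 f) * X + φ (Ssec 2 f) * X ^ 2 := by
  ext n
  have e1 : coeff n (φ (Ssec 1 f) * X) =
      if 1 ≤ n then coeff (n-1) (φ (Ssec 1 f)) else 0 := by
    simpa using coeff_mul_X_pow' (φ (Ssec 1 f)) 1 n
  rw [map_add, map_add, e1, coeff_mul_X_pow']
  simp only [hφ, coeff_Ssec]
  rcases (by omega : n % 3 = 0 ∨ n % 3 = 1 ∨ n % 3 = 2) with h | h | h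
  · rw [if_pos (by omega : 3 ∣ n), (by omega : 3*(n/3)+0 = n)]
    by_cases hn1 : 1 ≤ n
    · rw [if_pos hn1, if_neg (by omega : ¬ 3 ∣ n - 1)]
      by_cases hn2 : 2 ≤ n
      · rw [if_pos hn2, if_neg (by omega : ¬ 3 ∣ n - 2)]; ring
      · rw [if_neg hn2]; ring
    · rw [if_neg hn1, if_neg (by omega : ¬ 2 ≤ n)]; ring
  · rw [if_neg (by omega : ¬ 3 ∣ n), if_pos (by omega : 1 ≤ n),
      if_pos (by omega : 3 ∣ n - 1), (by omega : 3*((n-1)/3)+1 = n)]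
    by_cases hn2 : 2 ≤ n
    · rw [if_pos hn2, if_neg (by omega : ¬ 3 ∣ n - 2)]; ring
    · rw [if_neg hn2]; ring
  · rw [if_neg (by omega : ¬ 3 ∣ n), if_pos (by omega : 1 ≤ n),
      if_neg (by omega : ¬ 3 ∣ n - 1), if_pos (by omega : 2 ≤ n),
      if_pos (by omega : 3 ∣ n - 2), (by omega : 3*((n-2)/3)+2 = n)]
    ring

-- uniqueness helper
include hφ in
lemma Ssec_phi (a b c : PowerSeries k) :
    (Ssec 0 (φ a + φ b * X + φ c * X ^ 2) = a) ∧
    (Ssec 1 (φ a + φ b * X + φ c * X ^ 2) = b) ∧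
    (Ssec 2 (φ a + φ b * X + φ c * X ^ 2) = c) := by
  have e1 : ∀ g : PowerSeries k, ∀ m : ℕ, coeff m (g * X) =
      if 1 ≤ m then coeff (m-1) g else 0 := by
    intro g m; simpa using coeff_mul_X_pow' g 1 m
  refine ⟨?_, ?_, ?_⟩ <;>
  · ext n
    simp only [coeff_Ssec, map_add, e1, coeff_mul_X_pow', hφ]
    split_ifs <;>
      first
        | omega
        | (simp only [zero_add, add_zero]; congr 2 <;> omega)

include hφ in
lemma phi_X : φ (X : PowerSeries k) = X ^ 3 := by
  ext n
  rw [hφ, coeff_X_pow]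
  rcases (by omega : n = 3 ∨ (3 ∣ n ∧ n ≠ 3 ∧ n/3 ≠ 1) ∨ ¬ 3 ∣ n) with h | ⟨h1,h2,h3⟩ | h
  · subst h; norm_num
  · rw [if_pos h1, if_neg h2, coeff_X, if_neg h3]
  · rw [if_neg h, if_neg (by omega)]

include hφ in
lemma Ssec_semilinear (g v : PowerSeries k) (i : ℕ) (hi : i < 3) :
    Ssec i (φ g * v) = g * Ssec i v := by
  have hd := Ssec_decomp φ hφ v
  have hdec : φ g * v = φ (g * Ssec 0 v) + φ (g * Ssec 1 v) * X + φ (g * Ssec 2 v) * X ^ 2 := by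
    conv_lhs => rw [hd]
    simp only [map_mul]; ring
  rw [hdec]
  interval_cases i
  · exact (Ssec_phi φ hφ _ _ _).1
  · exact (Ssec_phi φ hφ _ _ _).2.1
  · exact (Ssec_phi φ hφ _ _ _).2.2

/-- first "coordinate operator": the `w`-coefficient of `v ⊗ 1`. -/
noncomputable def D1 (v : PowerSeries k) : PowerSeries k :=
  φ (Ssec 1 v) + 2 * (φ (Ssec 2 v) * X)

/-- second "coordinate operator": the `w²`-coefficient of `v ⊗ 1`. -/
noncomputable def D2 (v : PowerSeries k) : PowerSeries k :=
  φ (Ssec 2 v)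

lemma D1_add (u v : PowerSeries k) : D1 φ (u + v) = D1 φ u + D1 φ v := by
  simp only [D1, map_add]; ring

lemma D2_add (u v : PowerSeries k) : D2 φ (u + v) = D2 φ u + D2 φ v := by
  simp only [D2, map_add]

include hφ in
lemma D1_semilinear (g v : PowerSeries k) : D1 φ (φ g * v) = φ g * D1 φ v := by
  simp only [D1, Ssec_semilinear φ hφ g v 1 (by norm_num),
    Ssec_semilinear φ hφ g v 2 (by norm_num), map_mul]; ring

include hφ in
lemma D2_semilinear (g v : PowerSeries k) : D2 φ (φ g * v) = φ g * D2 φ v := by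
  simp only [D2, Ssec_semilinear φ hφ g v 2 (by norm_num), map_mul]

/-- The `φ.range`-bilinear coordinate map `(v, f) ↦ (v·f, D1 v · f, D2 v · f)`. -/
noncomputable def Bmap (hφ : ∀ (f : PowerSeries k) (n : ℕ),
      coeff n (φ f) = if 3 ∣ n then coeff (n / 3) f else 0) :
    PowerSeries k →ₗ[φ.range] PowerSeries k →ₗ[φ.range]
      (PowerSeries k × PowerSeries k × PowerSeries k) where
  toFun v :=
    { toFun := fun f => (v * f, D1 φ v * f, D2 φ v * f)
      map_add' := fun f g => by simp only [mul_add]; rfl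
      map_smul' := fun r f => by
        have : ∀ x y : PowerSeries k, x * (r • y) = r • (x * y) := fun x y => by
          show x * (↑r * y) = ↑r * (x * y); ring
        simp only [this]; rfl }
  map_add' := fun u v => by
    ext f <;> simp [D1_add, D2_add, add_mul]
  map_smul' := fun r v => by
    obtain ⟨g, hg⟩ := r.2
    have hr : (r : PowerSeries k) = φ g := hg.symm
    refine LinearMap.ext fun f => ?_
    have hsm : ∀ x : PowerSeries k, r • x = φ g * x := fun x => by
      rw [show r • x = ↑r * x from rfl, hr]
    show ((r • v) * f, D1 φ (r • v) * f, D2 φ (r • v) * f)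
        = (r • (v * f), r • (D1 φ v * f), r • (D2 φ v * f))
    rw [hsm, hsm, hsm, hsm, D1_semilinear φ hφ g v, D2_semilinear φ hφ g v]
    simp only [Prod.mk.injEq]
    refine ⟨by ring, by ring, by ring⟩

/-- The `k`-linear coordinate map `A →ₗ[k] R × R × R`. -/
noncomputable def Psi (hφ : ∀ (f : PowerSeries k) (n : ℕ),
      coeff n (φ f) = if 3 ∣ n then coeff (n / 3) f else 0) :
    (PowerSeries k ⊗[φ.range] PowerSeries k) →ₗ[k]
      (PowerSeries k × PowerSeries k × PowerSeries k) :=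
  (TensorProduct.lift (Bmap φ hφ)).restrictScalars k

@[simp] lemma Psi_tmul (hφ : ∀ (f : PowerSeries k) (n : ℕ),
      coeff n (φ f) = if 3 ∣ n then coeff (n / 3) f else 0)
    (v f : PowerSeries k) :
    Psi φ hφ (v ⊗ₜ[φ.range] f) = (v * f, D1 φ v * f, D2 φ v * f) := by
  simp [Psi, Bmap]

lemma Ssec_one : (Ssec 0 (1 : PowerSeries k) = 1) ∧ (Ssec 1 (1 : PowerSeries k) = 0)
    ∧ (Ssec 2 (1 : PowerSeries k) = 0) := by
  refine ⟨?_, ?_, ?_⟩ <;> ext n <;>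
    simp only [coeff_Ssec, coeff_one, map_zero] <;>
    split_ifs <;> first | rfl | omega | simp_all
lemma Ssec_X : (Ssec 0 (X : PowerSeries k) = 0) ∧ (Ssec 1 (X : PowerSeries k) = 1)
    ∧ (Ssec 2 (X : PowerSeries k) = 0) := by
  refine ⟨?_, ?_, ?_⟩ <;> ext n <;>
    simp only [coeff_Ssec, coeff_X, coeff_one, map_zero] <;>
    split_ifs <;> first | rfl | omega | simp_all
lemma Ssec_X2 : (Ssec 0 ((X:PowerSeries k) ^ 2) = 0) ∧ (Ssec 1 ((X:PowerSeries k) ^ 2) = 0)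
    ∧ (Ssec 2 ((X:PowerSeries k) ^ 2) = 1) := by
  refine ⟨?_, ?_, ?_⟩ <;> ext n <;>
    simp only [coeff_Ssec, coeff_X_pow, coeff_one, map_zero] <;>
    split_ifs <;> first | rfl | omega | simp_all

lemma tmul_phi_move (g a b : PowerSeries k) :
    (φ g * a) ⊗ₜ[φ.range] b = a ⊗ₜ[φ.range] (φ g * b) := by
  have h1 : φ g * a = (⟨φ g, φ.mem_range_self g⟩ : φ.range) • a := rfl
  have h2 : φ g * b = (⟨φ g, φ.mem_range_self g⟩ : φ.range) • b := rfl
  rw [h1, h2, TensorProduct.smul_tmul]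

lemma w_sq_mul (v g : PowerSeries k) :
    ((X : PowerSeries k) ⊗ₜ[φ.range] (1:PowerSeries k) - (1:PowerSeries k) ⊗ₜ[φ.range] X)^2
      * (v ⊗ₜ[φ.range] g)
    = (X^2*v) ⊗ₜ[φ.range] g - (X*v) ⊗ₜ[φ.range] (X*g) - (X*v) ⊗ₜ[φ.range] (X*g)
      + v ⊗ₜ[φ.range] (X^2*g) := by
  rw [show ∀ a b c : PowerSeries k ⊗[φ.range] PowerSeries k,
    (a-b)^2*c = a*a*c - a*b*c - a*b*c + b*b*c from fun a b c => by ring]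
  simp only [Algebra.TensorProduct.tmul_mul_tmul, one_mul, mul_one, one_pow,
    ← pow_two, ← mul_assoc]
  simp only [pow_two, Algebra.TensorProduct.tmul_mul_tmul, one_mul, mul_one]

section CharThree
variable [CharP k 3]

include hφ in
lemma w_cube :
    ((X : PowerSeries k) ⊗ₜ[φ.range] (1:PowerSeries k) - (1:PowerSeries k) ⊗ₜ[φ.range] X)^3
      = 0 := by
  have h3k : (3:k) = 0 := by exact_mod_cast CharP.cast_eq_zero k 3
  have h3 : (3 : PowerSeries k ⊗[φ.range] PowerSeries k) = 0 := by
    rw [show (3 : PowerSeries k ⊗[φ.range] PowerSeries k) = algebraMap k _ (3:k) from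
      (map_ofNat _ 3).symm, h3k, map_zero]
  rw [show ∀ a b : PowerSeries k ⊗[φ.range] PowerSeries k,
    (a-b)^3 = a^3 - b^3 - 3*(a^2*b) + 3*(a*b^2) from fun a b => by ring, h3]
  have e1 : ((X : PowerSeries k) ⊗ₜ[φ.range] (1:PowerSeries k))^3 = (X^3) ⊗ₜ[φ.range] 1 := by
    simp [pow_succ, Algebra.TensorProduct.tmul_mul_tmul]
  have e2 : ((1 : PowerSeries k) ⊗ₜ[φ.range] (X:PowerSeries k))^3 = 1 ⊗ₜ[φ.range] (X^3) := by
    simp [pow_succ, Algebra.TensorProduct.tmul_mul_tmul]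
  rw [e1, e2]
  have hmv := tmul_phi_move φ X 1 1
  rw [phi_X φ hφ, mul_one] at hmv
  rw [hmv]
  ring

include hφ in
lemma w_sq_left_right (f : PowerSeries k) :
    ((X : PowerSeries k) ⊗ₜ[φ.range] (1:PowerSeries k) - (1:PowerSeries k) ⊗ₜ[φ.range] X)^2
      * (f ⊗ₜ[φ.range] 1)
    = ((X : PowerSeries k) ⊗ₜ[φ.range] (1:PowerSeries k) - (1:PowerSeries k) ⊗ₜ[φ.range] X)^2
      * (1 ⊗ₜ[φ.range] f) := by
  have h0 := w_cube φ hφ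
  have hX : ((X : PowerSeries k) ⊗ₜ[φ.range] (1:PowerSeries k)
        - (1:PowerSeries k) ⊗ₜ[φ.range] X)^2 * ((X:PowerSeries k) ⊗ₜ[φ.range] (1:PowerSeries k))
      = ((X : PowerSeries k) ⊗ₜ[φ.range] (1:PowerSeries k)
        - (1:PowerSeries k) ⊗ₜ[φ.range] X)^2 * ((1:PowerSeries k) ⊗ₜ[φ.range] (X:PowerSeries k)) := by
    linear_combination h0
  have ha : ((X:PowerSeries k)^2) ⊗ₜ[φ.range] (1:PowerSeries k)
      = ((X:PowerSeries k) ⊗ₜ[φ.range] (1:PowerSeries k))^2 := by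
    simp [pow_two, Algebra.TensorProduct.tmul_mul_tmul]
  have hb : (1:PowerSeries k) ⊗ₜ[φ.range] ((X:PowerSeries k)^2)
      = ((1:PowerSeries k) ⊗ₜ[φ.range] (X:PowerSeries k))^2 := by
    simp [pow_two, Algebra.TensorProduct.tmul_mul_tmul]
  have hX2 : ((X : PowerSeries k) ⊗ₜ[φ.range] (1:PowerSeries k)
        - (1:PowerSeries k) ⊗ₜ[φ.range] X)^2 * (((X:PowerSeries k)^2) ⊗ₜ[φ.range] (1:PowerSeries k))
      = ((X : PowerSeries k) ⊗ₜ[φ.range] (1:PowerSeries k)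
        - (1:PowerSeries k) ⊗ₜ[φ.range] X)^2 * ((1:PowerSeries k) ⊗ₜ[φ.range] ((X:PowerSeries k)^2)) := by
    rw [ha, hb]
    linear_combination ((X : PowerSeries k) ⊗ₜ[φ.range] (1:PowerSeries k)
        + (1:PowerSeries k) ⊗ₜ[φ.range] X) * h0
  have hdecf : f ⊗ₜ[φ.range] (1:PowerSeries k) =
      (1:PowerSeries k) ⊗ₜ[φ.range] (φ (Ssec 0 f))
      + ((X:PowerSeries k) ⊗ₜ[φ.range] (1:PowerSeries k)) * ((1:PowerSeries k) ⊗ₜ[φ.range] (φ (Ssec 1 f)))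
      + (((X:PowerSeries k)^2) ⊗ₜ[φ.range] (1:PowerSeries k)) * ((1:PowerSeries k) ⊗ₜ[φ.range] (φ (Ssec 2 f))) := by
    conv_lhs => rw [Ssec_decomp φ hφ f]
    rw [add_tmul, add_tmul]
    simp only [Algebra.TensorProduct.tmul_mul_tmul, one_mul, mul_one]
    congr 1
    · congr 1
      · have hm := tmul_phi_move φ (Ssec 0 f) 1 1
        rw [mul_one] at hm; exact hm
      · have hm := tmul_phi_move φ (Ssec 1 f) X 1
        rw [mul_one] at hm; exact hm
    · have hm := tmul_phi_move φ (Ssec 2 f) (X^2) 1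
      rw [mul_one] at hm; exact hm
  have hdecf2 : (1:PowerSeries k) ⊗ₜ[φ.range] f =
      (1:PowerSeries k) ⊗ₜ[φ.range] (φ (Ssec 0 f))
      + ((1:PowerSeries k) ⊗ₜ[φ.range] (X:PowerSeries k)) * ((1:PowerSeries k) ⊗ₜ[φ.range] (φ (Ssec 1 f)))
      + (((1:PowerSeries k)) ⊗ₜ[φ.range] ((X:PowerSeries k)^2)) * ((1:PowerSeries k) ⊗ₜ[φ.range] (φ (Ssec 2 f))) := by
    conv_lhs => rw [Ssec_decomp φ hφ f]
    rw [tmul_add, tmul_add]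
    simp only [Algebra.TensorProduct.tmul_mul_tmul, one_mul, mul_one]
    congr 2
    · rw [mul_comm]
    · rw [mul_comm]
  rw [hdecf, hdecf2, mul_add, mul_add, mul_add, mul_add, ← mul_assoc, ← mul_assoc,
    ← mul_assoc, ← mul_assoc, hX, hX2]
end CharThree

lemma cm0 (a b : PowerSeries k) : coeff 0 (a*b) = coeff 0 a * coeff 0 b := by
  simp [coeff_mul]
lemma cm1 (a b : PowerSeries k) : coeff 1 (a*b)
    = coeff 0 a * coeff 1 b + coeff 1 a * coeff 0 b := by
  rw [coeff_mul, Finset.Nat.sum_antidiagonal_eq_sum_range_succ_mk]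
  rw [Finset.sum_range_succ, Finset.sum_range_succ, Finset.sum_range_zero]
  norm_num
lemma cm2 (a b : PowerSeries k) : coeff 2 (a*b)
    = coeff 0 a * coeff 2 b + coeff 1 a * coeff 1 b + coeff 2 a * coeff 0 b := by
  rw [coeff_mul, Finset.Nat.sum_antidiagonal_eq_sum_range_succ_mk]
  rw [Finset.sum_range_succ, Finset.sum_range_succ, Finset.sum_range_succ, Finset.sum_range_zero]
  norm_num

include hφ in
lemma coeff_D1_D2 (v : PowerSeries k) :
    coeff 0 (D1 φ v) = coeff 1 v ∧ coeff 1 (D1 φ v) = 2 * coeff 2 v ∧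
    coeff 2 (D1 φ v) = 0 ∧
    coeff 0 (D2 φ v) = coeff 2 v ∧ coeff 1 (D2 φ v) = 0 ∧ coeff 2 (D2 φ v) = 0 := by
  have e1 : ∀ g : PowerSeries k, ∀ m : ℕ, coeff m (g * X) =
      if 1 ≤ m then coeff (m-1) g else 0 := fun g m => by simpa using coeff_mul_X_pow' g 1 m
  have h2 : (2 : PowerSeries k) = C 2 := by
    have := map_ofNat (C : k →+* PowerSeries k) 2; exact this.symm
  refine ⟨?_,?_,?_,?_,?_,?_⟩ <;>
    simp only [D1, D2, map_add, h2, coeff_C_mul, e1, hφ, coeff_Ssec] <;> norm_num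

lemma D_one : D1 φ 1 = 0 ∧ D2 φ 1 = 0 := by
  constructor <;> simp [D1, D2, Ssec_one.2.1, Ssec_one.2.2, map_zero]
lemma D_X : D1 φ X = 1 ∧ D2 φ X = 0 := by
  constructor <;> simp [D1, D2, Ssec_X.2.1, Ssec_X.2.2, map_zero, map_one]
lemma D_X2 : D1 φ (X^2) = 2*X ∧ D2 φ (X^2) = 1 := by
  constructor <;> simp [D1, D2, Ssec_X2.2.1, Ssec_X2.2.2, map_zero, map_one]

include hφ in
lemma Psi_w_sq (g : PowerSeries k) :
    Psi φ hφ (((X : PowerSeries k) ⊗ₜ[φ.range] (1:PowerSeries k)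
        - (1:PowerSeries k) ⊗ₜ[φ.range] X)^2 * ((1:PowerSeries k) ⊗ₜ[φ.range] g))
      = (0, 0, g) := by
  have h := w_sq_mul φ 1 g
  rw [mul_one, mul_one] at h
  rw [h]
  simp only [map_add, map_sub, Psi_tmul, (D_one φ).1, (D_one φ).2, (D_X φ).1, (D_X φ).2,
    (D_X2 φ).1, (D_X2 φ).2, Prod.mk_sub_mk, Prod.mk_add_mk, Prod.mk.injEq]
  refine ⟨by ring, by ring, by ring⟩

/-- The test functionals. -/
noncomputable def mufun (p q r s1 s2 s3 : k) :
    (PowerSeries k × PowerSeries k × PowerSeries k) →ₗ[k] k where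
  toFun t :=
    (s1*p) * coeff 0 t.1 + (s2*p) * coeff 1 t.1 + (s3*p) * coeff 2 t.1
    + ((s1*q - s2*p) * coeff 0 t.2.1 + (s2*q - s3*p) * coeff 1 t.2.1
        + (s3*q) * coeff 2 t.2.1)
    + ((s1*r - 2*s2*q + s3*p) * coeff 0 t.2.2 + (s2*r - 2*s3*q) * coeff 1 t.2.2
        + (s3*r) * coeff 2 t.2.2)
  map_add' t s := by
    simp only [Prod.fst_add, Prod.snd_add, map_add]; ring
  map_smul' c t := by
    simp only [Prod.smul_fst, Prod.smul_snd, map_smul, smul_eq_mul, RingHom.id_apply]; ring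

include hφ in
lemma mu_vanish (p q r s1 s2 s3 : k) (v f : PowerSeries k)
    (hv : p * coeff 0 v + q * coeff 1 v + r * coeff 2 v = 0) :
    mufun p q r s1 s2 s3 (v * f, D1 φ v * f, D2 φ v * f) = 0 := by
  have hD := coeff_D1_D2 φ hφ v
  simp only [mufun, LinearMap.coe_mk, AddHom.coe_mk, cm0, cm1, cm2,
    hD.1, hD.2.1, hD.2.2.1, hD.2.2.2.1, hD.2.2.2.2.1, hD.2.2.2.2.2]
  linear_combination (s1 * coeff 0 f + s2 * coeff 1 f + s3 * coeff 2 f) * hv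

lemma mufun_third (p q r s1 s2 s3 : k) (g : PowerSeries k) :
    mufun p q r s1 s2 s3 ((0 : PowerSeries k), (0 : PowerSeries k), g)
    = (s1*r - 2*s2*q + s3*p) * coeff 0 g + (s2*r - 2*s3*q) * coeff 1 g
        + (s3*r) * coeff 2 g := by
  simp [mufun]
end Aux


/-- Let `k` be a field of characteristic `3`, `φ : k[[X]] → k[[X]]` the `k`-algebra
homomorphism `X ↦ X³` (characterized on coefficients), with range `k[[X³]] = φ.range`,
and `A = k[[X]] ⊗_{k[[X³]]} k[[X]]`, with `w = X⊗1 − 1⊗X ∈ A`.  Let `V ⊆ k[[X]]` be a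
`k[[X³]]`-submodule (a `k`-subspace stable under multiplication by all `φ f`) with
`k[[X]]/V` one-dimensional over `k`, let `W = w²A` be the ideal of `A` generated by `w²`,
and let `Im(V) ⊆ A` be the additive subgroup generated by the elements `v ⊗ f` with
`v ∈ V`, `f ∈ k[[X]]` (a `k`-subspace of `A`).  Then the quotient `w²A/(w²A ∩ Im(V))`,
realized as the image of `W` in `A/Im(V)`, is a finite-dimensional `k`-vector space whose
dimension equals `1` if `X ∈ V` and `X² ∈ V`, `2` if `X ∉ V` and `X² ∈ V`, and `3` if
`X² ∉ V`. -/
theorem finrank_w_sq_ideal_quotient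
    {k : Type*} [Field k] [CharP k 3]
    (φ : PowerSeries k →ₐ[k] PowerSeries k)
    (hφ : ∀ (f : PowerSeries k) (n : ℕ),
      coeff n (φ f) = if 3 ∣ n then coeff (n / 3) f else 0)
    (V : Submodule k (PowerSeries k))
    (hVmod : ∀ (f : PowerSeries k), ∀ v ∈ V, φ f * v ∈ V)
    (hdim : Module.finrank k (PowerSeries k ⧸ V) = 1)
    (W : Submodule k (PowerSeries k ⊗[φ.range] PowerSeries k))
    (hW : W = (Ideal.span
      {((X : PowerSeries k) ⊗ₜ[φ.range] (1 : PowerSeries k) -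
          (1 : PowerSeries k) ⊗ₜ[φ.range] (X : PowerSeries k)) ^ 2}).restrictScalars k)
    (ImV : Submodule k (PowerSeries k ⊗[φ.range] PowerSeries k))
    (hImV : ImV = Submodule.span k
      {a : PowerSeries k ⊗[φ.range] PowerSeries k |
        ∃ v ∈ V, ∃ f : PowerSeries k, a = v ⊗ₜ[φ.range] f}) :
    FiniteDimensional k (W.map ImV.mkQ) ∧
    ((X : PowerSeries k) ∈ V → (X : PowerSeries k) ^ 2 ∈ V →
      Module.finrank k (W.map ImV.mkQ) = 1) ∧
    ((X : PowerSeries k) ∉ V → (X : PowerSeries k) ^ 2 ∈ V →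
      Module.finrank k (W.map ImV.mkQ) = 2) ∧
    ((X : PowerSeries k) ^ 2 ∉ V →
      Module.finrank k (W.map ImV.mkQ) = 3) := by

  -- abbreviations
  set R := PowerSeries k with hR
  set w : PowerSeries k ⊗[φ.range] PowerSeries k :=
    (X : PowerSeries k) ⊗ₜ[φ.range] (1 : PowerSeries k) -
      (1 : PowerSeries k) ⊗ₜ[φ.range] (X : PowerSeries k) with hwdef
  -- Step 1 : X^3 · R ⊆ V
  have hX3V : ∀ v ∈ V, (X:PowerSeries k)^3 * v ∈ V := by
    intro v hv
    have h := hVmod X v hv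
    rwa [phi_X φ hφ] at h
  have hX3all : ∀ g : PowerSeries k, (X:PowerSeries k)^3 * g ∈ V := by
    obtain ⟨e', he0', hsp'⟩ := finrank_eq_one_iff'.mp hdim
    set T : (PowerSeries k ⧸ V) →ₗ[k] (PowerSeries k ⧸ V) :=
      Submodule.mapQ V V (LinearMap.mulLeft k ((X:PowerSeries k)^3))
        (fun v hv => hX3V v hv) with hT
    have hTapp : ∀ g : PowerSeries k, T (V.mkQ g) = V.mkQ ((X:PowerSeries k)^3 * g) := by
      intro g
      simp [hT, Submodule.mapQ_apply, LinearMap.mulLeft_apply]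
      rfl
    obtain ⟨c, hc⟩ := hsp' (T e')
    have hTall : ∀ x, T x = c • x := by
      intro x
      obtain ⟨t, ht⟩ := hsp' x
      rw [← ht, map_smul, ← hc, smul_comm]
    have hc0 : c = 0 := by
      by_contra hc0
      have hu : IsUnit ((X:PowerSeries k)^3 - C c) := by
        rw [PowerSeries.isUnit_iff_constantCoeff]
        have : constantCoeff ((X:PowerSeries k)^3 - C c) = -c := by
          simp [map_sub, map_pow, constantCoeff_X, constantCoeff_C]
        rw [this]
        exact (neg_ne_zero.mpr hc0).isUnit
      obtain ⟨u, hu⟩ := hu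
      have hall : ∀ g : PowerSeries k, ((X:PowerSeries k)^3 - C c) * g ∈ V := by
        intro g
        have h1 : V.mkQ ((X:PowerSeries k)^3 * g) = c • V.mkQ g := by
          rw [← hTapp]; exact hTall _
        have h2 : V.mkQ (((X:PowerSeries k)^3 - C c) * g) = 0 := by
          rw [sub_mul, map_sub, h1]
          have : C c * g = c • g := (smul_eq_C_mul g c).symm
          rw [this, map_smul, sub_self]
        exact (Submodule.Quotient.mk_eq_zero V).mp h2
      have hVtop : ∀ h : PowerSeries k, h ∈ V := by
        intro h
        have hmem := hall (((u⁻¹ : (PowerSeries k)ˣ) : PowerSeries k) * h)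
        rwa [← mul_assoc, ← hu, Units.mul_inv, one_mul] at hmem
      apply he0'
      obtain ⟨x, hx⟩ := Submodule.Quotient.mk_surjective V e'
      rw [← hx]
      exact (Submodule.Quotient.mk_eq_zero V).mpr (hVtop x)
    intro g
    have h1 : V.mkQ ((X:PowerSeries k)^3 * g) = 0 := by
      rw [← hTapp, hTall, hc0, zero_smul]
    exact (Submodule.Quotient.mk_eq_zero V).mp h1
  -- Step 2 : the linear functional data (p,q,r)
  obtain ⟨e, he0, hsp⟩ : ∃ e : PowerSeries k ⧸ V, e ≠ 0 ∧ ∀ y, ∃ c : k, c • e = y := by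
    obtain ⟨e, he0, h⟩ := finrank_eq_one_iff'.mp hdim
    exact ⟨e, he0, h⟩
  obtain ⟨p, hp⟩ := hsp (V.mkQ 1)
  obtain ⟨q, hq⟩ := hsp (V.mkQ X)
  obtain ⟨r, hr⟩ := hsp (V.mkQ (X^2))
  have htrunc : ∀ v : PowerSeries k, ∃ h : PowerSeries k,
      v = C (coeff 0 v) + C (coeff 1 v) * X + C (coeff 2 v) * X^2 + X^3 * h := by
    intro v
    refine ⟨PowerSeries.mk fun n => coeff (n+3) v, ?_⟩
    ext n
    have e1 : ∀ c : k, ∀ m : ℕ, coeff m (C c * X) = if m = 1 then c else 0 := by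
      intro c m; rw [coeff_C_mul, coeff_X]; split_ifs <;> simp
    have e2 : ∀ c : k, ∀ m : ℕ, coeff m (C c * X^2) = if m = 2 then c else 0 := by
      intro c m; rw [coeff_C_mul, coeff_X_pow]; split_ifs <;> simp
    rw [map_add, map_add, map_add, coeff_C, e1, e2, coeff_X_pow_mul']
    rcases (by omega : n = 0 ∨ n = 1 ∨ n = 2 ∨ 3 ≤ n) with h | h | h | h
    · subst h; norm_num
    · subst h; norm_num
    · subst h; norm_num
    · rw [if_neg (by omega), if_neg (by omega), if_neg (by omega), if_pos h, coeff_mk,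
        (by omega : n - 3 + 3 = n)]
      ring
  have hmem : ∀ v : PowerSeries k,
      (v ∈ V ↔ p * coeff 0 v + q * coeff 1 v + r * coeff 2 v = 0) := by
    intro v
    obtain ⟨h, hh⟩ := htrunc v
    have hmk : V.mkQ v = (p * coeff 0 v + q * coeff 1 v + r * coeff 2 v) • e := by
      conv_lhs => rw [hh]
      rw [map_add, map_add, map_add]
      have e0 : V.mkQ ((X:PowerSeries k)^3 * h) = 0 :=
        (Submodule.Quotient.mk_eq_zero V).mpr (hX3all h)
      have e1 : V.mkQ (C (coeff 0 v)) = coeff 0 v • V.mkQ 1 := by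
        rw [show (C (coeff 0 v) : PowerSeries k) = coeff 0 v • (1:PowerSeries k) by
          rw [smul_eq_C_mul, mul_one], map_smul]
      have e2 : V.mkQ (C (coeff 1 v) * X) = coeff 1 v • V.mkQ X := by
        rw [show (C (coeff 1 v) * X : PowerSeries k) = coeff 1 v • (X:PowerSeries k) from
          (smul_eq_C_mul X _).symm, map_smul]
      have e3 : V.mkQ (C (coeff 2 v) * X^2) = coeff 2 v • V.mkQ (X^2) := by
        rw [show (C (coeff 2 v) * X^2 : PowerSeries k)
            = coeff 2 v • ((X:PowerSeries k)^2) from (smul_eq_C_mul (X^2) _).symm, map_smul]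
      rw [e0, e1, e2, e3, add_zero, ← hp, ← hq, ← hr, smul_smul, smul_smul, smul_smul,
        ← add_smul, ← add_smul]
      congr 1
      ring
    constructor
    · intro hv
      have h0 : V.mkQ v = 0 := (Submodule.Quotient.mk_eq_zero V).mpr hv
      rw [hmk] at h0
      rcases smul_eq_zero.mp h0 with h1 | h1
      · exact h1
      · exact absurd h1 he0
    · intro h0
      have h1 : V.mkQ v = 0 := by rw [hmk, h0, zero_smul]
      exact (Submodule.Quotient.mk_eq_zero V).mp h1
  have hpqr : ¬ (p = 0 ∧ q = 0 ∧ r = 0) := by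
    rintro ⟨hp0, hq0, hr0⟩
    have hall : ∀ v : PowerSeries k, v ∈ V := fun v =>
      (hmem v).mpr (by rw [hp0, hq0, hr0]; ring)
    apply he0
    obtain ⟨x, hx⟩ := Submodule.Quotient.mk_surjective V e
    rw [← hx]
    exact (Submodule.Quotient.mk_eq_zero V).mpr (hall x)
  have hXmem : ((X : PowerSeries k) ∈ V ↔ q = 0) := by
    rw [hmem]
    rw [coeff_X, coeff_X, coeff_X]
    norm_num
  have hX2mem : ((X : PowerSeries k)^2 ∈ V ↔ r = 0) := by
    rw [hmem]
    rw [coeff_X_pow, coeff_X_pow, coeff_X_pow]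
    norm_num
  -- Step 3 : upper-bound membership lemma
  have hgen : ∀ v ∈ V, ∀ f : PowerSeries k, v ⊗ₜ[φ.range] f ∈ ImV := by
    intro v hv f
    rw [hImV]
    exact Submodule.subset_span ⟨v, hv, f, rfl⟩
  have hUB : ∀ v, v ∈ V → (X:PowerSeries k)*v ∈ V → (X:PowerSeries k)^2*v ∈ V →
      ∀ g : PowerSeries k, w^2 * ((1:PowerSeries k) ⊗ₜ[φ.range] (v*g)) ∈ ImV := by
    intro v hv hXv hX2v g
    have h1 : w^2 * ((1:PowerSeries k) ⊗ₜ[φ.range] (v*g)) = w^2 * (v ⊗ₜ[φ.range] g) := by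
      rw [show (1:PowerSeries k) ⊗ₜ[φ.range] (v*g)
          = ((1:PowerSeries k) ⊗ₜ[φ.range] v) * ((1:PowerSeries k) ⊗ₜ[φ.range] g) by
        rw [Algebra.TensorProduct.tmul_mul_tmul, one_mul]]
      rw [← mul_assoc, hwdef, ← w_sq_left_right φ hφ v, mul_assoc,
        Algebra.TensorProduct.tmul_mul_tmul, mul_one, one_mul]
    rw [h1, hwdef, w_sq_mul φ v g]
    refine Submodule.add_mem _ (Submodule.sub_mem _ (Submodule.sub_mem _ ?_ ?_) ?_) ?_
    · exact hgen _ hX2v g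
    · exact hgen _ hXv _
    · exact hgen _ hXv _
    · exact hgen _ hv _
  -- the three generators
  set b : Fin 3 → (PowerSeries k ⊗[φ.range] PowerSeries k) ⧸ ImV :=
    ![ImV.mkQ (w^2 * ((1:PowerSeries k) ⊗ₜ[φ.range] (1:PowerSeries k))),
      ImV.mkQ (w^2 * ((1:PowerSeries k) ⊗ₜ[φ.range] (X:PowerSeries k))),
      ImV.mkQ (w^2 * ((1:PowerSeries k) ⊗ₜ[φ.range] ((X:PowerSeries k)^2)))] with hb
  -- Step 4 : the span description
  have hWmem : ∀ g : PowerSeries k,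
      w^2 * ((1:PowerSeries k) ⊗ₜ[φ.range] g) ∈ W := by
    intro g
    rw [hW, Submodule.restrictScalars_mem, Ideal.mem_span_singleton']
    exact ⟨(1:PowerSeries k) ⊗ₜ[φ.range] g, by ring⟩
  have hWspan : W.map ImV.mkQ = Submodule.span k (Set.range b) := by
    apply le_antisymm
    · rintro x hx
      rw [Submodule.mem_map] at hx
      obtain ⟨z, hz, rfl⟩ := hx
      rw [hW, Submodule.restrictScalars_mem, Ideal.mem_span_singleton'] at hz
      obtain ⟨y, rfl⟩ := hz
      induction y using TensorProduct.induction_on with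
      | zero =>
        rw [zero_mul, map_zero]; exact Submodule.zero_mem _
      | tmul f g =>
        have h1 : (f ⊗ₜ[φ.range] g) * w^2
            = w^2 * ((1:PowerSeries k) ⊗ₜ[φ.range] (f*g)) := by
          rw [show f ⊗ₜ[φ.range] g
              = (f ⊗ₜ[φ.range] (1:PowerSeries k)) * ((1:PowerSeries k) ⊗ₜ[φ.range] g) by
            rw [Algebra.TensorProduct.tmul_mul_tmul, mul_one, one_mul]]
          rw [mul_comm _ (w^2), ← mul_assoc, hwdef, w_sq_left_right φ hφ f,
            mul_assoc, Algebra.TensorProduct.tmul_mul_tmul, one_mul]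
        rw [h1]
        obtain ⟨h, hh⟩ := htrunc (f*g)
        rw [hh, tmul_add, tmul_add, tmul_add, mul_add, mul_add, mul_add,
          map_add, map_add, map_add]
        refine Submodule.add_mem _ (Submodule.add_mem _ (Submodule.add_mem _ ?_ ?_) ?_) ?_
        · have e : (1:PowerSeries k) ⊗ₜ[φ.range] (C (coeff 0 (f*g)))
              = coeff 0 (f*g) • ((1:PowerSeries k) ⊗ₜ[φ.range] (1:PowerSeries k)) := by
            rw [show (C (coeff 0 (f*g)) : PowerSeries k)
                = coeff 0 (f*g) • (1:PowerSeries k) by rw [smul_eq_C_mul, mul_one], tmul_smul]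
          rw [e, mul_smul_comm, map_smul]
          exact Submodule.smul_mem _ _ (Submodule.subset_span ⟨0, rfl⟩)
        · have e : (1:PowerSeries k) ⊗ₜ[φ.range] (C (coeff 1 (f*g)) * X)
              = coeff 1 (f*g) • ((1:PowerSeries k) ⊗ₜ[φ.range] (X:PowerSeries k)) := by
            rw [show (C (coeff 1 (f*g)) * X : PowerSeries k)
                = coeff 1 (f*g) • (X:PowerSeries k) from (smul_eq_C_mul _ _).symm, tmul_smul]
          rw [e, mul_smul_comm, map_smul]
          exact Submodule.smul_mem _ _ (Submodule.subset_span ⟨1, rfl⟩)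
        · have e : (1:PowerSeries k) ⊗ₜ[φ.range] (C (coeff 2 (f*g)) * X^2)
              = coeff 2 (f*g) • ((1:PowerSeries k) ⊗ₜ[φ.range] ((X:PowerSeries k)^2)) := by
            rw [show (C (coeff 2 (f*g)) * X^2 : PowerSeries k)
                = coeff 2 (f*g) • ((X:PowerSeries k)^2) from (smul_eq_C_mul _ _).symm, tmul_smul]
          rw [e, mul_smul_comm, map_smul]
          exact Submodule.smul_mem _ _ (Submodule.subset_span ⟨2, rfl⟩)
        · have hmem3 : w^2 * ((1:PowerSeries k) ⊗ₜ[φ.range] ((X:PowerSeries k)^3*h)) ∈ ImV := by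
            refine hUB ((X:PowerSeries k)^3) ?_ ?_ ?_ h
            · have := hX3all 1; rwa [mul_one] at this
            · have := hX3all X; rwa [mul_comm] at this
            · have := hX3all (X^2); rwa [mul_comm] at this
          have e0 : ImV.mkQ (w^2 * ((1:PowerSeries k) ⊗ₜ[φ.range] ((X:PowerSeries k)^3*h))) = 0 := by
            rwa [Submodule.mkQ_apply, Submodule.Quotient.mk_eq_zero]
          rw [e0]
          exact Submodule.zero_mem _
      | add y1 y2 ih1 ih2 =>
        rw [add_mul, map_add]
        exact Submodule.add_mem _ ih1 ih2
    · rw [Submodule.span_le]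
      rintro x ⟨i, rfl⟩
      fin_cases i
      · exact Submodule.mem_map_of_mem (hWmem 1)
      · exact Submodule.mem_map_of_mem (hWmem X)
      · exact Submodule.mem_map_of_mem (hWmem (X^2))
  -- Step 5 : vanishing of the test functionals on ImV
  have hFvan : ∀ s1 s2 s3 : k, ∀ z ∈ ImV, (mufun p q r s1 s2 s3) (Psi φ hφ z) = 0 := by
    intro s1 s2 s3 z hz
    have hker : ImV ≤ LinearMap.ker ((mufun p q r s1 s2 s3).comp (Psi φ hφ)) := by
      rw [hImV, Submodule.span_le]
      rintro a ⟨v, hv, f, rfl⟩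
      simp only [SetLike.mem_coe, LinearMap.mem_ker, LinearMap.comp_apply, Psi_tmul]
      exact mu_vanish φ hφ p q r s1 s2 s3 v f ((hmem v).mp hv)
    simpa using hker hz
  -- Step 6 : evaluation of Psi on the generators
  have hPsib : ∀ g0 g1 g2 : k,
      Psi φ hφ (g0 • (w^2 * ((1:PowerSeries k) ⊗ₜ[φ.range] (1:PowerSeries k)))
        + g1 • (w^2 * ((1:PowerSeries k) ⊗ₜ[φ.range] (X:PowerSeries k)))
        + g2 • (w^2 * ((1:PowerSeries k) ⊗ₜ[φ.range] ((X:PowerSeries k)^2))))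
      = (0, 0, g0 • (1:PowerSeries k) + g1 • (X:PowerSeries k) + g2 • ((X:PowerSeries k)^2)) := by
    intro g0 g1 g2
    rw [map_add, map_add, map_smul, map_smul, map_smul, hwdef,
      Psi_w_sq φ hφ 1, Psi_w_sq φ hφ X, Psi_w_sq φ hφ (X^2)]
    simp only [Prod.smul_mk, Prod.mk_add_mk, smul_zero, add_zero, zero_add]
  -- a helper for extracting linear relations
  have hrel : ∀ g0 g1 g2 : k,
      g0 • b 0 + g1 • b 1 + g2 • b 2 = 0 →
      ∀ s1 s2 s3 : k,
        (s1*r - 2*s2*q + s3*p) * g0 + (s2*r - 2*s3*q) * g1 + (s3*r) * g2 = 0 := by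
    intro g0 g1 g2 hg s1 s2 s3
    set z := g0 • (w^2 * ((1:PowerSeries k) ⊗ₜ[φ.range] (1:PowerSeries k)))
        + g1 • (w^2 * ((1:PowerSeries k) ⊗ₜ[φ.range] (X:PowerSeries k)))
        + g2 • (w^2 * ((1:PowerSeries k) ⊗ₜ[φ.range] ((X:PowerSeries k)^2))) with hz
    have hzIm : z ∈ ImV := by
      have h0 : ImV.mkQ z = 0 := by
        rw [hz, map_add, map_add, map_smul, map_smul, map_smul]
        exact hg
      rwa [Submodule.mkQ_apply, Submodule.Quotient.mk_eq_zero] at h0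
    have hF := hFvan s1 s2 s3 z hzIm
    rw [hz, hPsib g0 g1 g2, mufun_third] at hF
    have c0 : coeff 0 (g0 • (1:PowerSeries k) + g1 • (X:PowerSeries k)
        + g2 • ((X:PowerSeries k)^2)) = g0 := by
      simp [map_add, map_smul, coeff_X, coeff_X_pow, coeff_one, smul_eq_mul]
    have c1 : coeff 1 (g0 • (1:PowerSeries k) + g1 • (X:PowerSeries k)
        + g2 • ((X:PowerSeries k)^2)) = g1 := by
      simp [map_add, map_smul, coeff_X, coeff_X_pow, coeff_one, smul_eq_mul]
    have c2 : coeff 2 (g0 • (1:PowerSeries k) + g1 • (X:PowerSeries k)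
        + g2 • ((X:PowerSeries k)^2)) = g2 := by
      simp [map_add, map_smul, coeff_X, coeff_X_pow, coeff_one, smul_eq_mul]
    rw [c0, c1, c2] at hF
    linear_combination hF
  have h2k : (2:k) ≠ 0 := by
    intro h2
    have h3 : ((2:ℕ):k) = 0 := by exact_mod_cast h2
    rw [CharP.cast_eq_zero_iff k 3 2] at h3
    omega
  have hb2zero : (X:PowerSeries k)^2 ∈ V → b 2 = 0 := by
    intro hX2V
    have m : w^2 * ((1:PowerSeries k) ⊗ₜ[φ.range] ((X:PowerSeries k)^2*(1:PowerSeries k))) ∈ ImV := by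
      refine hUB ((X:PowerSeries k)^2) hX2V ?_ ?_ 1
      · have := hX3all 1; rwa [mul_one, show ((X:PowerSeries k)^3) = X*X^2 by ring] at this
      · have := hX3all X; rwa [show ((X:PowerSeries k)^3*X) = X^2*X^2 by ring] at this
    rw [mul_one] at m
    show ImV.mkQ _ = 0
    rwa [Submodule.mkQ_apply, Submodule.Quotient.mk_eq_zero]
  have hb1zero : (X:PowerSeries k) ∈ V → (X:PowerSeries k)^2 ∈ V → b 1 = 0 := by
    intro hXV hX2V
    have m : w^2 * ((1:PowerSeries k) ⊗ₜ[φ.range] ((X:PowerSeries k)*(1:PowerSeries k))) ∈ ImV := by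
      refine hUB (X:PowerSeries k) hXV ?_ ?_ 1
      · rwa [show ((X:PowerSeries k)*X) = X^2 by ring]
      · have := hX3all 1; rwa [mul_one, show ((X:PowerSeries k)^3) = X^2*X by ring] at this
    rw [mul_one] at m
    show ImV.mkQ _ = 0
    rwa [Submodule.mkQ_apply, Submodule.Quotient.mk_eq_zero]
  refine ⟨?_, ?_, ?_, ?_⟩
  · rw [hWspan]
    exact FiniteDimensional.span_of_finite k (Set.finite_range b)
  · -- case 1 : X ∈ V, X² ∈ V : dimension 1
    intro hXV hX2V
    have hq0 : q = 0 := hXmem.mp hXV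
    have hr0 : r = 0 := hX2mem.mp hX2V
    have hp0 : p ≠ 0 := fun h => hpqr ⟨h, hq0, hr0⟩
    have hspan1 : Submodule.span k (Set.range b)
        = Submodule.span k (Set.range ![b 0]) := by
      apply le_antisymm <;> rw [Submodule.span_le] <;> rintro x ⟨i, rfl⟩
      · fin_cases i
        · exact Submodule.subset_span ⟨0, rfl⟩
        · show b 1 ∈ _
          rw [show b 1 = 0 from hb1zero hXV hX2V]; exact Submodule.zero_mem _
        · show b 2 ∈ _
          rw [show b 2 = 0 from hb2zero hX2V]; exact Submodule.zero_mem _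
      · fin_cases i
        · exact Submodule.subset_span ⟨0, rfl⟩
    have hli : LinearIndependent k ![b 0] := by
      rw [Fintype.linearIndependent_iff]
      intro g hg
      rw [Fin.sum_univ_one] at hg
      have hg3 : g 0 • b 0 + (0:k) • b 1 + (0:k) • b 2 = 0 := by
        rw [zero_smul, zero_smul, add_zero, add_zero]; exact hg
      have e3 := hrel (g 0) 0 0 hg3 0 0 1
      have : p * g 0 = 0 := by rw [hq0, hr0] at e3; linear_combination e3
      have hg0 : g 0 = 0 := (mul_eq_zero.mp this).resolve_left hp0
      intro i; fin_cases i; exact hg0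
    rw [hWspan, hspan1, finrank_span_eq_card hli]
    simp
  · -- case 2 : X ∉ V, X² ∈ V : dimension 2
    intro hXV hX2V
    have hr0 : r = 0 := hX2mem.mp hX2V
    have hq0 : q ≠ 0 := fun h => hXV (hXmem.mpr h)
    have hspan2 : Submodule.span k (Set.range b)
        = Submodule.span k (Set.range ![b 0, b 1]) := by
      apply le_antisymm <;> rw [Submodule.span_le] <;> rintro x ⟨i, rfl⟩
      · fin_cases i
        · exact Submodule.subset_span ⟨0, rfl⟩
        · exact Submodule.subset_span ⟨1, rfl⟩
        · show b 2 ∈ _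
          rw [show b 2 = 0 from hb2zero hX2V]; exact Submodule.zero_mem _
      · fin_cases i
        · exact Submodule.subset_span ⟨0, rfl⟩
        · exact Submodule.subset_span ⟨1, rfl⟩
    have hli : LinearIndependent k ![b 0, b 1] := by
      rw [Fintype.linearIndependent_iff]
      intro g hg
      rw [Fin.sum_univ_two] at hg
      have hg3 : g 0 • b 0 + g 1 • b 1 + (0:k) • b 2 = 0 := by
        rw [zero_smul, add_zero]; exact hg
      have e2 := hrel (g 0) (g 1) 0 hg3 0 1 0
      have e3 := hrel (g 0) (g 1) 0 hg3 0 0 1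
      rw [hr0] at e2 e3
      have h20 : (2*q) * g 0 = 0 := by linear_combination (-1 : k) * e2
      have hg0 : g 0 = 0 :=
        (mul_eq_zero.mp h20).resolve_left (mul_ne_zero h2k hq0)
      have h21 : (2*q) * g 1 = 0 := by
        rw [hg0] at e3; linear_combination (-1:k) * e3
      have hg1 : g 1 = 0 :=
        (mul_eq_zero.mp h21).resolve_left (mul_ne_zero h2k hq0)
      intro i; fin_cases i
      · exact hg0
      · exact hg1
    rw [hWspan, hspan2, finrank_span_eq_card hli]
    simp
  · -- case 3 : X² ∉ V : dimension 3
    intro hX2V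
    have hr0 : r ≠ 0 := fun h => hX2V (hX2mem.mpr h)
    have hli : LinearIndependent k b := by
      rw [Fintype.linearIndependent_iff]
      intro g hg
      rw [Fin.sum_univ_three] at hg
      have e1 := hrel (g 0) (g 1) (g 2) hg 1 0 0
      have e2 := hrel (g 0) (g 1) (g 2) hg 0 1 0
      have e3 := hrel (g 0) (g 1) (g 2) hg 0 0 1
      have hg0 : g 0 = 0 := by
        have : r * g 0 = 0 := by linear_combination e1
        exact (mul_eq_zero.mp this).resolve_left hr0
      have hg1 : g 1 = 0 := by
        have : r * g 1 = 0 := by rw [hg0] at e2; linear_combination e2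
        exact (mul_eq_zero.mp this).resolve_left hr0
      have hg2 : g 2 = 0 := by
        have : r * g 2 = 0 := by rw [hg0, hg1] at e3; linear_combination e3
        exact (mul_eq_zero.mp this).resolve_left hr0
      intro i; fin_cases i
      · exact hg0
      · exact hg1
      · exact hg2
    rw [hWspan, finrank_span_eq_card hli]
    simp
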